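/- Let f be the approximate squaring map f(x) = x·⌈x⌉ on the rationals. For every rational number r > 1 whose denominator in lowest terms is 2 (i.e., r = (2m+1)/2 for some positive integer m), there exists an integer k ≥ 1 such that the iterate f^(k)(r) is an integer. -/

import Mathlib

/-- The approximate squaring map f(x) = x·⌈x⌉ on the rationals. -/
def approxSq (x : ℚ) : ℚ := x * (⌈x⌉ : ℚ)

lemma ceil_half_odd (m : ℤ) : ⌈((2*m+1 : ℤ) : ℚ)/2⌉ = m + 1 := by
  have h : ((2*m+1 : ℤ) : ℚ)/2 = (1:ℚ)/2 + (m : ℚ) := by push_cast; ring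
  have h1 : ⌈(1:ℚ)/2⌉ = 1 := by
    rw [Int.ceil_eq_iff]
    norm_num
  rw [h, Int.ceil_add_intCast, h1]
  omega

lemma aux : ∀ n : ℕ, ∀ a : ℤ, Odd a → 3 ≤ a → ¬((2:ℤ)^(n+1) ∣ a - 1) →
    ∃ k : ℕ, 1 ≤ k ∧ (approxSq^[k] ((a:ℚ)/2)).den = 1 := by
  intro n
  induction n with
  | zero =>
    intro a ha _ hdvd
    obtain ⟨m, hm⟩ := ha
    have h2 : (2:ℤ)^(0+1) = 2 := by norm_num
    rw [h2] at hdvd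
    exact absurd ⟨m, by omega⟩ hdvd
  | succ n ih =>
    intro a ha h3 hdvd
    obtain ⟨m, hm⟩ := ha
    subst hm
    by_cases h4 : (4:ℤ) ∣ (2*m+1) + 1
    · obtain ⟨b, hb⟩ := h4
      refine ⟨1, le_refl 1, ?_⟩
      have hc : approxSq (((2*m+1:ℤ):ℚ)/2) = (((2*m+1)*b : ℤ) : ℚ) := by
        unfold approxSq
        rw [ceil_half_odd]
        have hmb : (m:ℚ) = 2*(b:ℚ) - 1 := by exact_mod_cast (by omega : m = 2*b - 1)
        push_cast
        rw [hmb]; ring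
      rw [Function.iterate_one, hc, Rat.den_intCast]
    · have hm1odd : Odd (m+1) := by
        rcases Int.even_or_odd (m+1) with he | ho
        · exfalso; obtain ⟨c, hc⟩ := he; exact h4 ⟨c, by omega⟩
        · exact ho
      have ha'odd : Odd ((2*m+1) * (m+1)) := Odd.mul ⟨m, rfl⟩ hm1odd
      have h3' : 3 ≤ (2*m+1) * (m+1) := by nlinarith
      have hstep : approxSq (((2*m+1:ℤ):ℚ)/2) = (((2*m+1)*(m+1) : ℤ) : ℚ)/2 := by
        unfold approxSq
        rw [ceil_half_odd]
        push_cast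
        ring
      have hdvd' : ¬((2:ℤ)^(n+1) ∣ (2*m+1)*(m+1) - 1) := by
        intro hd
        have hkey : 2 * ((2*m+1)*(m+1) - 1) = ((2*m+1) - 1) * ((2*m+1) + 2) := by ring
        have hd2 : (2:ℤ)^(n+2) ∣ ((2*m+1) - 1) * ((2*m+1) + 2) := by
          rw [← hkey, pow_succ, mul_comm ((2:ℤ)^(n+1)) 2]
          exact mul_dvd_mul_left 2 hd
        have hcop : IsCoprime ((2:ℤ)) ((2*m+1) + 2) := by
          rw [Int.prime_two.coprime_iff_not_dvd]
          rw [Int.two_dvd_ne_zero]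
          omega
        have hfin := (hcop.pow_left).dvd_of_dvd_mul_right hd2
        exact hdvd (by simpa using hfin)
      obtain ⟨k, hk1, hk2⟩ := ih ((2*m+1)*(m+1)) ha'odd h3' hdvd'
      refine ⟨k + 1, by omega, ?_⟩
      rw [Function.iterate_succ_apply, hstep]
      exact hk2

/-- (Lagarias–Sloane, 2004) For every rational r > 1 with denominator 2 in
lowest terms, some iterate of the approximate squaring map at r is an integer. -/
theorem approx_squaring_denominator_two (r : ℚ) (hr : 1 < r) (hden : r.den = 2) :
    ∃ k : ℕ, 1 ≤ k ∧ (approxSq^[k] r).den = 1 := by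
  have hodd : Odd r.num := by
    rcases Int.even_or_odd r.num with he | ho
    · exfalso
      have hred := r.reduced
      rw [hden] at hred
      have h2 : 2 ∣ r.num.natAbs := by
        obtain ⟨c, hc⟩ := he
        exact ⟨c.natAbs, by omega⟩
      have := Nat.dvd_gcd h2 (dvd_refl 2)
      rw [Nat.coprime_iff_gcd_eq_one.mp hred] at this
      omega
    · exact ho
  have hr2 : r = (r.num : ℚ)/2 := by
    have := Rat.num_div_den r
    rw [hden] at this
    exact_mod_cast this.symm
  have h3 : 3 ≤ r.num := by
    have h2q : (2:ℚ) < (r.num : ℚ) := by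
      rw [hr2] at hr; linarith
    have : (2:ℤ) < r.num := by exact_mod_cast h2q
    obtain ⟨m, hm⟩ := hodd
    omega
  set n : ℕ := (r.num - 1).toNat with hn
  have hdvd : ¬((2:ℤ)^(n+1) ∣ r.num - 1) := by
    intro hd
    have hpos : (0:ℤ) < r.num - 1 := by omega
    have hle := Int.le_of_dvd hpos hd
    have h1 : (n : ℤ) = r.num - 1 := by omega
    have h2 : n < 2^(n+1) :=
      (Nat.lt_two_pow_self (n := n)).trans (Nat.pow_lt_pow_right (by norm_num) (by omega))
    have h4 : ((2:ℤ))^(n+1) = ((2^(n+1) : ℕ) : ℤ) := by push_cast; ring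
    omega
  obtain ⟨k, hk1, hk2⟩ := aux n r.num hodd h3 hdvd
  exact ⟨k, hk1, by rw [hr2]; exact hk2⟩
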